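/- Let S be a semidomain with semifield of fractions F(S), and let u be a nonzero element of S. Then the following are equivalent: (1) every nonzero prime ideal of S contains u; (2) every nonzero ideal of S contains some power of u; (3) F(S) = S[1/u]. -/
import Mathlib

/-- For a nonzero u in a semidomain S with semifield of fractions F(S), TFAE:
every nonzero prime ideal contains u; every nonzero ideal contains a power of u;
F(S) = S[1/u]. -/
theorem goldman_element_tfae {S K : Type*} [CommSemiring S] [Nontrivial S]
    [IsCancelMulZero S] [CommSemiring K] [Algebra S K]
    [IsLocalization (nonZeroDivisors S) K]
    (u : S) (hu : u ≠ 0) :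
    ((∀ P : Ideal S, P.IsPrime → P ≠ ⊥ → u ∈ P) ↔
      (∀ I : Ideal S, I ≠ ⊥ → ∃ n : ℕ, 1 ≤ n ∧ u ^ n ∈ I)) ∧
    ((∀ P : Ideal S, P.IsPrime → P ≠ ⊥ → u ∈ P) ↔
      (∃ v : K, v * algebraMap S K u = 1 ∧
        Subsemiring.closure (Set.range (algebraMap S K) ∪ {v}) = ⊤)) := by
  have hinj : Function.Injective (algebraMap S K) := by
    intro x y h
    obtain ⟨c, hc⟩ := (IsLocalization.eq_iff_exists (nonZeroDivisors S) K).mp h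
    exact mul_left_cancel₀ (nonZeroDivisors.coe_ne_zero c) hc
  haveI : NoZeroDivisors S := ⟨fun {a b} h => by
    by_cases ha : a = 0
    · exact Or.inl ha
    · exact Or.inr (mul_left_cancel₀ ha (h.trans (mul_zero a).symm))⟩
  have huM : u ∈ nonZeroDivisors S := mem_nonZeroDivisors_of_ne_zero hu
  -- (1) ↔ (2)
  have h12 : (∀ P : Ideal S, P.IsPrime → P ≠ ⊥ → u ∈ P) ↔
      (∀ I : Ideal S, I ≠ ⊥ → ∃ n : ℕ, 1 ≤ n ∧ u ^ n ∈ I) := by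
    constructor
    · intro h1 I hI
      by_cases hItop : I = ⊤
      · exact ⟨1, le_refl 1, by simp [hItop]⟩
      by_contra hn
      push_neg at hn
      have hdisj : Disjoint (I : Set S) (Submonoid.powers u) := by
        rw [Set.disjoint_left]
        rintro x hxI ⟨n, rfl⟩
        rcases Nat.eq_zero_or_pos n with h0 | h0
        · exact hItop (Ideal.eq_top_iff_one I |>.mpr (by simpa [h0] using hxI))
        · exact hn n h0 hxI
      obtain ⟨P, hP, hIP, hPd⟩ := Ideal.exists_le_prime_disjoint I (Submonoid.powers u) hdisj
      have hPne : P ≠ ⊥ := by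
        intro h
        exact hI (le_bot_iff.mp (h ▸ hIP))
      exact Set.disjoint_left.mp hPd (h1 P hP hPne) ⟨1, pow_one u⟩
    · intro h2 P hP hPne
      obtain ⟨n, _, hun⟩ := h2 P hPne
      exact hP.mem_of_pow_mem n hun
  refine ⟨h12, ?_, ?_⟩
  · -- (1) → (3)
    intro h1
    have h2 := h12.mp h1
    set v : K := IsLocalization.mk' K (1 : S) ⟨u, huM⟩ with hvdef
    have hv : v * algebraMap S K u = 1 := by
      have h := IsLocalization.mk'_spec K (1 : S) ⟨u, huM⟩
      rw [map_one] at h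
      exact h
    refine ⟨v, hv, ?_⟩
    set T := Subsemiring.closure (Set.range (algebraMap S K) ∪ {v}) with hT
    have hmapT : ∀ s : S, algebraMap S K s ∈ T :=
      fun s => Subsemiring.subset_closure (Set.mem_union_left _ ⟨s, rfl⟩)
    have hvT : v ∈ T := Subsemiring.subset_closure (Set.mem_union_right _ rfl)
    rw [eq_top_iff]
    intro x _
    obtain ⟨⟨a, t⟩, hx⟩ := IsLocalization.surj (nonZeroDivisors S) x
    -- the ideal of denominators
    set I : Ideal S :=
      { carrier := {b | algebraMap S K b * x ∈ T}
        zero_mem' := by simp [zero_mem T]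
        add_mem' := by
          intro b c hb hc
          simp only [Set.mem_setOf_eq, map_add, add_mul] at *
          exact add_mem hb hc
        smul_mem' := by
          intro c b hb
          simp only [Set.mem_setOf_eq, smul_eq_mul, map_mul, mul_assoc] at *
          exact mul_mem (hmapT c) hb } with hIdef
    have htI : (t : S) ∈ I := by
      show algebraMap S K t * x ∈ T
      rw [mul_comm, hx]
      exact hmapT a
    have ht0 : (t : S) ≠ 0 := nonZeroDivisors.coe_ne_zero t
    have hIne : I ≠ ⊥ := fun h => ht0 ((Submodule.mem_bot S).mp (h ▸ htI))
    obtain ⟨n, _, hun⟩ := h2 I hIne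
    have hkey : algebraMap S K (u ^ n) * x ∈ T := hun
    have hvn : v ^ n * algebraMap S K (u ^ n) = 1 := by
      rw [map_pow, ← mul_pow, hv, one_pow]
    have : x = v ^ n * (algebraMap S K (u ^ n) * x) := by
      rw [← mul_assoc, hvn, one_mul]
    rw [this]
    exact mul_mem (pow_mem hvT n) hkey
  · -- (3) → (1)
    rintro ⟨v, hv, hcl⟩ P hP hPne
    obtain ⟨a, haP, ha0⟩ := Submodule.ne_bot_iff P |>.mp hPne
    have haM : a ∈ nonZeroDivisors S := mem_nonZeroDivisors_of_ne_zero ha0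
    set w : K := IsLocalization.mk' K (1 : S) ⟨a, haM⟩ with hwdef
    have hw : w * algebraMap S K a = 1 := by
      have h := IsLocalization.mk'_spec K (1 : S) ⟨a, haM⟩
      rw [map_one] at h
      exact h
    have hwT : w ∈ Subsemiring.closure (Set.range (algebraMap S K) ∪ {v}) := by
      rw [hcl]; trivial
    have hform : ∀ z ∈ Subsemiring.closure (Set.range (algebraMap S K) ∪ {v}),
        ∃ (s : S) (n : ℕ), algebraMap S K (u ^ n) * z = algebraMap S K s := by
      intro z hz
      induction hz using Subsemiring.closure_induction with
      | mem y hy =>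
        rcases hy with ⟨s, rfl⟩ | hy
        · exact ⟨s, 0, by simp⟩
        · rw [Set.mem_singleton_iff] at hy
          subst hy
          exact ⟨1, 1, by rw [pow_one, mul_comm, hv, map_one]⟩
      | zero => exact ⟨0, 0, by simp⟩
      | one => exact ⟨1, 0, by simp⟩
      | add y z hy hz ihy ihz =>
        obtain ⟨s, m, hs⟩ := ihy
        obtain ⟨t, n, ht⟩ := ihz
        refine ⟨u ^ n * s + u ^ m * t, m + n, ?_⟩
        rw [map_add, mul_add, map_mul, map_mul]
        congr 1
        · rw [pow_add, map_mul, mul_comm (algebraMap S K (u ^ m)), mul_assoc, hs]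
        · rw [pow_add, map_mul, mul_assoc, ht]
      | mul y z hy hz ihy ihz =>
        obtain ⟨s, m, hs⟩ := ihy
        obtain ⟨t, n, ht⟩ := ihz
        refine ⟨s * t, m + n, ?_⟩
        rw [pow_add, map_mul, map_mul, ← hs, ← ht]
        ring
    obtain ⟨s, n, hs⟩ := hform w hwT
    have : algebraMap S K (u ^ n) = algebraMap S K (s * a) := by
      have := congrArg (· * algebraMap S K a) hs
      simpa [mul_assoc, hw, map_mul] using this
    have hun : u ^ n = s * a := hinj this
    exact hP.mem_of_pow_mem n (hun ▸ P.mul_mem_left s haP)
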